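/- Let S̄ be a finite set with |S̄| ≥ 2 and let Ȳ^{(1)}, …, Ȳ^{(m)} be i.i.d. S̄-valued random variables with common distribution P̄ on S̄. Define the empirical distribution P_Y(s̄') = (1/m)·Σ_{i=1}^m 1{Ȳ^{(i)} = s̄'}. Then for any κ ∈ (0,1) and ε ∈ (0,2), if m ≥ 2·(ln(2^{|S̄|} − 2) − ln κ)/ε², then Pr( Σ_{s̄'∈S̄} |P_Y(s̄') − P̄(s̄')| ≥ ε ) ≤ κ. -/

import Mathlib

open MeasureTheory ProbabilityTheory

section helpers

lemma mono_on_Ici' {f f' : ℝ → ℝ} (hf : ∀ x ∈ Set.Ici (0:ℝ), HasDerivAt f (f' x) x)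
    (h' : ∀ x ∈ Set.Ici (0:ℝ), 0 ≤ f' x) : MonotoneOn f (Set.Ici 0) := by
  refine monotoneOn_of_deriv_nonneg (convex_Ici 0)
    (fun x hx => (hf x hx).continuousAt.continuousWithinAt)
    (fun x hx => (hf x (interior_subset hx)).differentiableAt.differentiableWithinAt)
    (fun x hx => ?_)
  rw [(hf x (interior_subset hx)).deriv]
  exact h' x (interior_subset hx)

lemma bern_mgf_le {p : ℝ} (hp0 : 0 ≤ p) (hp1 : p ≤ 1) {t : ℝ} (ht : 0 ≤ t) :
    (1 - p) + p * Real.exp t ≤ Real.exp (p * t + t ^ 2 / 8) := by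
  set q : ℝ := 1 - p with hq
  have hq0 : 0 ≤ q := by rw [hq]; linarith
  have hpos : ∀ x : ℝ, 0 ≤ x → (1:ℝ) ≤ q + p * Real.exp x := by
    intro x hx
    have h1 : 1 ≤ Real.exp x := Real.one_le_exp hx
    nlinarith
  have hne : ∀ x : ℝ, 0 ≤ x → q + p * Real.exp x ≠ 0 := fun x hx => by
    have := hpos x hx; linarith
  set g : ℝ → ℝ := fun x => p * x + x ^ 2 / 8 - Real.log (q + p * Real.exp x) with hgdef
  set g1 : ℝ → ℝ := fun x => p + x / 4 - p * Real.exp x / (q + p * Real.exp x) with hg1def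
  have hd : ∀ x : ℝ, HasDerivAt (fun y => q + p * Real.exp y) (p * Real.exp x) x :=
    fun x => (HasDerivAt.const_mul p (Real.hasDerivAt_exp x)).const_add q
  have hgderiv : ∀ x ∈ Set.Ici (0:ℝ), HasDerivAt g (g1 x) x := by
    intro x hx
    have hlog : HasDerivAt (fun y => Real.log (q + p * Real.exp y))
        (p * Real.exp x / (q + p * Real.exp x)) x := (hd x).log (hne x hx)
    have hpoly : HasDerivAt (fun y : ℝ => p * y + y ^ 2 / 8) (p + x / 4) x := by
      have h1 := (hasDerivAt_pow 2 x).div_const 8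
      have h2 := HasDerivAt.const_mul p (hasDerivAt_id x)
      refine (h2.add h1).congr_deriv ?_
      norm_num; ring
    exact hpoly.sub hlog
  have hg1deriv : ∀ x ∈ Set.Ici (0:ℝ), HasDerivAt g1
      (1/4 - q * (p * Real.exp x) / (q + p * Real.exp x) ^ 2) x := by
    intro x hx
    have hu : HasDerivAt (fun y => p * Real.exp y) (p * Real.exp x) x :=
      HasDerivAt.const_mul p (Real.hasDerivAt_exp x)
    have hrat := hu.div (hd x) (hne x hx)
    have hlin : HasDerivAt (fun y : ℝ => p + y / 4) (1/4 : ℝ) x := by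
      simpa using ((hasDerivAt_id x).div_const 4).const_add p
    refine (hlin.sub hrat).congr_deriv ?_
    have h0 := hne x hx
    field_simp
    ring
  have hg1nonneg : ∀ x ∈ Set.Ici (0:ℝ), 0 ≤ g1 x := by
    have hmono : MonotoneOn g1 (Set.Ici 0) := by
      refine mono_on_Ici' hg1deriv (fun x hx => ?_)
      have h1 : (1:ℝ) ≤ q + p * Real.exp x := hpos x hx
      have key : 4 * (q * (p * Real.exp x)) ≤ (q + p * Real.exp x) ^ 2 := by
        nlinarith [sq_nonneg (q - p * Real.exp x)]
      rw [sub_nonneg, div_le_iff₀ (by positivity)]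
      nlinarith
    intro x hx
    have h01 : q + p = (1:ℝ) := by rw [hq]; ring
    have h0 : g1 0 = 0 := by
      simp [hg1def, Real.exp_zero, h01]
    rw [← h0]
    exact hmono (by simp) hx (by exact hx)
  have hgmono : MonotoneOn g (Set.Ici 0) := mono_on_Ici' hgderiv hg1nonneg
  have hg0 : g 0 = 0 := by
    have h01 : q + p = (1:ℝ) := by rw [hq]; ring
    simp [hgdef, Real.exp_zero, h01]
  have hgt : 0 ≤ g t := by rw [← hg0]; exact hgmono (by simp) ht ht
  have hlogle : Real.log (q + p * Real.exp t) ≤ p * t + t ^ 2 / 8 := by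
    simp only [hgdef] at hgt; linarith
  calc q + p * Real.exp t = Real.exp (Real.log (q + p * Real.exp t)) := by
        rw [Real.exp_log (by have := hpos t ht; linarith)]
    _ ≤ Real.exp (p * t + t ^ 2 / 8) := Real.exp_le_exp.mpr hlogle

lemma indic_helper {Ω : Type*} [MeasurableSpace Ω] (μ : Measure Ω) [IsProbabilityMeasure μ]
    (f : Ω → Prop) [DecidablePred f] (hB : MeasurableSet {ω | f ω}) (t : ℝ) :
    Integrable (fun ω => Real.exp (t * (if f ω then (1:ℝ) else 0))) μ ∧
    ∫ ω, Real.exp (t * (if f ω then (1:ℝ) else 0)) ∂μ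
      = (1 - (μ {ω | f ω}).toReal) + (μ {ω | f ω}).toReal * Real.exp t := by
  have heq : (fun ω => Real.exp (t * (if f ω then (1:ℝ) else 0)))
      = fun ω => Set.indicator {ω | f ω} (fun _ => Real.exp t - 1) ω + 1 := by
    funext ω
    by_cases h : f ω
    · simp [h, Set.indicator_of_mem, Set.mem_setOf_eq]
    · simp [h, Set.indicator_of_notMem]
  constructor
  · rw [heq]; exact ((integrable_const _).indicator hB).add (integrable_const 1)
  · rw [heq, integral_add ((integrable_const _).indicator hB) (integrable_const 1),
      integral_indicator_const _ hB, integral_const]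
    simp [smul_eq_mul, measureReal_def]
    ring

end helpers

theorem stmt10 {Ω : Type*} [MeasurableSpace Ω] (μ : Measure Ω) [IsProbabilityMeasure μ]
    {Sb : Type*} [Fintype Sb] [Nonempty Sb] [DecidableEq Sb]
    [MeasurableSpace Sb] [MeasurableSingletonClass Sb]
    (hcard : 2 ≤ Fintype.card Sb)
    -- i.i.d. Sb-valued random variables Y 1, ..., Y m with common distribution Pbar
    (m : ℕ) (Y : Fin m → Ω → Sb) (hYmeas : ∀ i, Measurable (Y i))
    (hindep : iIndepFun Y μ)
    (Pbar : Sb → ℝ)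
    (hdist : ∀ i sb, (μ {ω | Y i ω = sb}).toReal = Pbar sb)
    (κ ε : ℝ) (hκ0 : 0 < κ) (hκ1 : κ < 1) (hε0 : 0 < ε) (hε2 : ε < 2)
    -- the sample-size requirement
    (hm : 2 * (Real.log ((2 : ℝ) ^ (Fintype.card Sb) - 2) - Real.log κ) / ε ^ 2 ≤ (m : ℝ)) :
    -- Pr(‖P_Y − P̄‖₁ ≥ ε) ≤ κ
    μ {ω | ε ≤ ∑ sb : Sb,
        |(1 / (m : ℝ)) * ∑ i, (if Y i ω = sb then (1 : ℝ) else 0) - Pbar sb|}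
      ≤ ENNReal.ofReal κ := by
  classical
  have hk4 : (4:ℕ) ≤ 2 ^ Fintype.card Sb := by
    calc (4:ℕ) = 2 ^ 2 := rfl
    _ ≤ 2 ^ Fintype.card Sb := Nat.pow_le_pow_right (by norm_num) hcard
  have hNcast : ((2 ^ Fintype.card Sb - 2 : ℕ) : ℝ) = (2:ℝ) ^ Fintype.card Sb - 2 := by
    push_cast [Nat.cast_sub (by omega : (2:ℕ) ≤ 2 ^ Fintype.card Sb)]
    ring
  have hNpos : (0:ℝ) < (2:ℝ) ^ Fintype.card Sb - 2 := by
    rw [← hNcast]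
    have : (2:ℕ) ≤ 2 ^ Fintype.card Sb - 2 := by omega
    exact_mod_cast by omega
  have hN1 : (1:ℝ) < (2:ℝ) ^ Fintype.card Sb - 2 := by
    rw [← hNcast]
    exact_mod_cast by omega
  -- m ≥ 1
  have hm1 : 1 ≤ m := by
    by_contra hcon
    have hm0 : m = 0 := by omega
    rw [hm0] at hm
    have hlogN : 0 < Real.log ((2:ℝ) ^ Fintype.card Sb - 2) := Real.log_pos hN1
    have hlogκ : Real.log κ < 0 := Real.log_neg hκ0 hκ1
    have hpos : 0 < 2 * (Real.log ((2:ℝ) ^ Fintype.card Sb - 2) - Real.log κ) / ε ^ 2 :=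
      div_pos (by linarith) (by positivity)
    simp only [Nat.cast_zero] at hm
    linarith
  have hmpos : (0:ℝ) < (m:ℝ) := by exact_mod_cast hm1
  set i₀ : Fin m := ⟨0, hm1⟩ with hi₀
  have hPnn : ∀ s, 0 ≤ Pbar s := fun s => (hdist i₀ s) ▸ ENNReal.toReal_nonneg
  have hfiber' : ∀ (i : Fin m) (s : Sb), (μ (Y i ⁻¹' {s})).toReal = Pbar s := by
    intro i s
    rw [show Y i ⁻¹' {s} = {ω | Y i ω = s} from by ext ω; simp]
    exact hdist i s
  have hmuA : ∀ (i : Fin m) (A : Finset Sb), (μ {ω | Y i ω ∈ A}).toReal = ∑ s ∈ A, Pbar s := by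
    intro i A
    have h2 := sum_measure_preimage_singleton (μ := μ) A
      (f := Y i) (fun s _ => hYmeas i (measurableSet_singleton s))
    have h3 : {ω | Y i ω ∈ A} = Y i ⁻¹' ↑A := by ext ω; simp
    rw [h3, ← h2, ENNReal.toReal_sum (fun s _ => measure_ne_top μ _)]
    exact Finset.sum_congr rfl fun s _ => hfiber' i s
  have hPsum : ∑ s : Sb, Pbar s = 1 := by
    rw [← hmuA i₀ Finset.univ]
    have : {ω | Y i₀ ω ∈ (Finset.univ : Finset Sb)} = Set.univ := by ext ω; simp
    rw [this, measure_univ, ENNReal.toReal_one]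
  set P : Finset Sb → ℝ := fun A => ∑ s ∈ A, Pbar s with hP
  set E : Finset Sb → Set Ω :=
    fun A => {ω | (m:ℝ) * (P A + ε/2) ≤ ∑ i, (if Y i ω ∈ A then (1:ℝ) else 0)} with hE
  -- Chernoff bound for each A
  have hchern : ∀ A : Finset Sb,
      μ (E A) ≤ ENNReal.ofReal (Real.exp (-(m:ℝ) * ε ^ 2 / 2)) := by
    intro A
    set t : ℝ := 2 * ε with htdef
    have ht0 : (0:ℝ) ≤ t := by positivity
    set X : Fin m → Ω → ℝ := fun i ω => if Y i ω ∈ A then 1 else 0 with hX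
    have hXm : ∀ i, Measurable (X i) := fun i =>
      (measurable_of_countable (fun s : Sb => if s ∈ A then (1:ℝ) else 0)).comp (hYmeas i)
    have hindepX : iIndepFun X μ :=
      hindep.comp (fun _ s => if s ∈ A then (1:ℝ) else 0) (fun _ => measurable_of_countable _)
    have hBmeas : ∀ i : Fin m, MeasurableSet {ω | Y i ω ∈ A} := by
      intro i
      rw [show {ω | Y i ω ∈ A} = Y i ⁻¹' ↑A from by ext ω; simp]
      exact hYmeas i A.measurableSet
    have hhelp := fun i : Fin m => indic_helper μ (fun ω => Y i ω ∈ A) (hBmeas i) t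
    have hint : ∀ i : Fin m, Integrable (fun ω => Real.exp (t * X i ω)) μ := fun i =>
      (hhelp i).1
    have hp0 : 0 ≤ P A := Finset.sum_nonneg fun s _ => hPnn s
    have hp1 : P A ≤ 1 := by
      rw [← hPsum]
      exact Finset.sum_le_sum_of_subset_of_nonneg (Finset.subset_univ A)
        (fun s _ _ => hPnn s)
    have hmgf_i : ∀ i : Fin m, mgf (X i) μ t = (1 - P A) + P A * Real.exp t := by
      intro i
      have h := (hhelp i).2
      rw [hmuA i A] at h
      exact h
    have hmgfsum : mgf (∑ i, X i) μ t = ((1 - P A) + P A * Real.exp t) ^ m := by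
      rw [hindepX.mgf_sum hXm Finset.univ]
      simp [hmgf_i]
    have hintsum : Integrable (fun ω => Real.exp (t * (∑ i, X i) ω)) μ :=
      hindepX.integrable_exp_mul_sum hXm (fun i _ => hint i)
    have hch := measure_ge_le_exp_mul_mgf (X := ∑ i, X i) (μ := μ)
      ((m:ℝ) * (P A + ε/2)) ht0 hintsum
    have hEeq : E A = {ω | (m:ℝ) * (P A + ε/2) ≤ (∑ i, X i) ω} := by
      ext ω
      simp only [hE, hX, Set.mem_setOf_eq, Finset.sum_apply]
    have hb1 : ((1 - P A) + P A * Real.exp t) ^ m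
        ≤ Real.exp (P A * t + t ^ 2 / 8) ^ m := by
      refine pow_le_pow_left₀ ?_ (bern_mgf_le hp0 hp1 ht0) m
      have := Real.exp_pos t
      nlinarith
    have hb2 : Real.exp (-t * ((m:ℝ) * (P A + ε/2))) * Real.exp (P A * t + t ^ 2 / 8) ^ m
        = Real.exp (-(m:ℝ) * ε ^ 2 / 2) := by
      rw [← Real.exp_nat_mul, ← Real.exp_add]
      congr 1
      rw [htdef]; ring
    have hfin : (μ (E A)).toReal ≤ Real.exp (-(m:ℝ) * ε ^ 2 / 2) := by
      rw [hEeq]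
      calc (μ {ω | (m:ℝ) * (P A + ε/2) ≤ (∑ i, X i) ω}).toReal
          ≤ Real.exp (-t * ((m:ℝ) * (P A + ε/2))) * mgf (∑ i, X i) μ t := hch
        _ ≤ Real.exp (-t * ((m:ℝ) * (P A + ε/2))) * Real.exp (P A * t + t ^ 2 / 8) ^ m := by
            rw [hmgfsum]
            exact mul_le_mul_of_nonneg_left hb1 (Real.exp_pos _).le
        _ = Real.exp (-(m:ℝ) * ε ^ 2 / 2) := hb2
    rw [ENNReal.le_ofReal_iff_toReal_le (measure_ne_top μ _) (Real.exp_pos _).le]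
    exact hfin
  -- the collection of proper nonempty subsets
  set 𝒜 : Finset (Finset Sb) :=
    ((Finset.univ : Finset Sb).powerset.erase ∅).erase Finset.univ with h𝒜
  have hunivmem : (Finset.univ : Finset Sb) ∈ (Finset.univ : Finset Sb).powerset.erase ∅ := by
    rw [Finset.mem_erase]
    exact ⟨Finset.univ_nonempty.ne_empty, Finset.mem_powerset_self _⟩
  have hcardA : 𝒜.card = 2 ^ Fintype.card Sb - 2 := by
    rw [h𝒜, Finset.card_erase_of_mem hunivmem,
      Finset.card_erase_of_mem (Finset.mem_powerset.mpr (Finset.empty_subset _)),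
      Finset.card_powerset, Finset.card_univ]
    omega
  -- inclusion in the union
  have hincl : {ω | ε ≤ ∑ sb : Sb,
      |(1 / (m : ℝ)) * ∑ i, (if Y i ω = sb then (1 : ℝ) else 0) - Pbar sb|}
      ⊆ ⋃ A ∈ 𝒜, E A := by
    intro ω hω
    simp only [Set.mem_setOf_eq] at hω
    set d : Sb → ℝ :=
      fun s => (1 / (m : ℝ)) * ∑ i, (if Y i ω = s then (1:ℝ) else 0) - Pbar s with hd
    have hone : ∀ i : Fin m, ∑ s : Sb, (if Y i ω = s then (1:ℝ) else 0) = 1 := by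
      intro i
      rw [Finset.sum_ite_eq]
      simp
    have hdsum : ∑ s : Sb, d s = 0 := by
      simp only [hd]
      rw [Finset.sum_sub_distrib, ← Finset.mul_sum, Finset.sum_comm, hPsum]
      simp [hone, hmpos.ne']
    set A : Finset Sb := Finset.univ.filter (fun s => 0 < d s) with hA
    have e1 : ∑ s ∈ A, |d s| = ∑ s ∈ A, d s :=
      Finset.sum_congr rfl fun s hs => abs_of_pos (Finset.mem_filter.mp hs).2
    have e2 : ∑ s ∈ Finset.univ.filter (fun s => ¬ 0 < d s), |d s|
        = -∑ s ∈ Finset.univ.filter (fun s => ¬ 0 < d s), d s := by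
      rw [← Finset.sum_neg_distrib]
      exact Finset.sum_congr rfl fun s hs =>
        abs_of_nonpos (le_of_not_gt (Finset.mem_filter.mp hs).2)
    have habs := Finset.sum_filter_add_sum_filter_not Finset.univ
      (fun s => 0 < d s) (fun s => |d s|)
    have hsp := Finset.sum_filter_add_sum_filter_not Finset.univ (fun s => 0 < d s) d
    have hge : ε / 2 ≤ ∑ s ∈ A, d s := by
      rw [hA]
      linarith [hω, habs, hsp, hdsum, e1, e2]
    have hApos : 0 < ∑ s ∈ A, d s := lt_of_lt_of_le (by positivity) hge
    have hA1 : A ≠ ∅ := by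
      intro h
      rw [h] at hApos
      simp at hApos
    have hA2 : A ≠ Finset.univ := by
      intro h
      rw [h] at hApos
      rw [hdsum] at hApos
      exact lt_irrefl 0 hApos
    have hmem : A ∈ 𝒜 := by
      rw [h𝒜, Finset.mem_erase, Finset.mem_erase]
      exact ⟨hA2, hA1, Finset.mem_powerset.mpr (Finset.subset_univ A)⟩
    refine Set.mem_biUnion hmem ?_
    have key : ∑ s ∈ A, d s
        = (1 / (m:ℝ)) * (∑ i, (if Y i ω ∈ A then (1:ℝ) else 0)) - P A := by
      simp only [hd, hP]
      rw [Finset.sum_sub_distrib, ← Finset.mul_sum, Finset.sum_comm]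
      congr 2
      refine Finset.sum_congr rfl fun i _ => ?_
      simp [Finset.sum_ite_eq]
    simp only [hE, Set.mem_setOf_eq]
    rw [key] at hge
    have := mul_le_mul_of_nonneg_left hge hmpos.le
    rw [mul_sub, ← mul_assoc, mul_one_div, div_self hmpos.ne', one_mul] at this
    linarith
  -- put it together
  calc μ {ω | ε ≤ ∑ sb : Sb,
        |(1 / (m : ℝ)) * ∑ i, (if Y i ω = sb then (1 : ℝ) else 0) - Pbar sb|}
      ≤ μ (⋃ A ∈ 𝒜, E A) := measure_mono hincl
    _ ≤ ∑ A ∈ 𝒜, μ (E A) := measure_biUnion_finset_le 𝒜 E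
    _ ≤ ∑ B ∈ 𝒜, ENNReal.ofReal (Real.exp (-(m:ℝ) * ε ^ 2 / 2)) :=
        Finset.sum_le_sum fun A _ => hchern A
    _ = ((𝒜.card : ℕ) : ENNReal) * ENNReal.ofReal (Real.exp (-(m:ℝ) * ε ^ 2 / 2)) := by
        rw [Finset.sum_const, nsmul_eq_mul]
    _ ≤ ENNReal.ofReal κ := by
        rw [hcardA, ← ENNReal.ofReal_natCast, ← ENNReal.ofReal_mul (by positivity)]
        apply ENNReal.ofReal_le_ofReal
        rw [hNcast]
        have hεsq : (0:ℝ) < ε ^ 2 := by positivity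
        have h1 : 2 * (Real.log ((2:ℝ) ^ Fintype.card Sb - 2) - Real.log κ) ≤ (m:ℝ) * ε ^ 2 := by
          rw [div_le_iff₀ hεsq] at hm
          linarith
        have h2 : Real.exp (-(m:ℝ) * ε ^ 2 / 2)
            ≤ κ / ((2:ℝ) ^ Fintype.card Sb - 2) := by
          rw [show κ / ((2:ℝ) ^ Fintype.card Sb - 2)
              = Real.exp (Real.log κ - Real.log ((2:ℝ) ^ Fintype.card Sb - 2)) from by
            rw [Real.exp_sub, Real.exp_log hκ0, Real.exp_log hNpos]]
          exact Real.exp_le_exp.mpr (by linarith)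
        calc ((2:ℝ) ^ Fintype.card Sb - 2) * Real.exp (-(m:ℝ) * ε ^ 2 / 2)
            ≤ ((2:ℝ) ^ Fintype.card Sb - 2) * (κ / ((2:ℝ) ^ Fintype.card Sb - 2)) :=
              mul_le_mul_of_nonneg_left h2 hNpos.le
          _ = κ := by field_simp
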